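/- Let c ≠ 0 be a real constant, and let h, u, σ, p̄ : ℝ → ℝ → ℝ be continuously differentiable functions of (x,t). Assume that at every point (x,t) the mass equation ∂_t h + ∂_x(h·u) = 0 and the averaged-pressure evolution equation ∂_t(h·p̄) + ∂_x[h·u·(p̄ + c²)] − c²·u·∂_x h = −c²·σ hold. Then at every point (x,t): p̄·(−h·∂_x u − σ) = (1/c²)·( ∂_t(h·p̄²/2) + ∂_x(h·u·p̄²/2) ). -/

import Mathlib

/-- Partial derivative with respect to the first (space) argument. -/
noncomputable def pdx (f : ℝ → ℝ → ℝ) (x t : ℝ) : ℝ := deriv (fun x' => f x' t) x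

/-- Partial derivative with respect to the second (time) argument. -/
noncomputable def pdt (f : ℝ → ℝ → ℝ) (x t : ℝ) : ℝ := deriv (fun t' => f x t') t

theorem stmt_4 (c : ℝ) (hc : c ≠ 0)
    (h u sg pbar : ℝ → ℝ → ℝ)
    (hh : ContDiff ℝ 1 (fun p : ℝ × ℝ => h p.1 p.2))
    (hu : ContDiff ℝ 1 (fun p : ℝ × ℝ => u p.1 p.2))
    (hsg : ContDiff ℝ 1 (fun p : ℝ × ℝ => sg p.1 p.2))
    (hpbar : ContDiff ℝ 1 (fun p : ℝ × ℝ => pbar p.1 p.2))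
    (mass : ∀ x t : ℝ, pdt h x t + pdx (fun x t => h x t * u x t) x t = 0)
    (pEvol : ∀ x t : ℝ,
      pdt (fun x t => h x t * pbar x t) x t
        + pdx (fun x t => h x t * u x t * (pbar x t + c ^ 2)) x t
        - c ^ 2 * u x t * pdx h x t = -(c ^ 2) * sg x t) :
    ∀ x t : ℝ,
      pbar x t * (-(h x t) * pdx u x t - sg x t)
      = (1 / c ^ 2) *
          (pdt (fun x t => h x t * (pbar x t) ^ 2 / 2) x t
            + pdx (fun x t => h x t * u x t * (pbar x t) ^ 2 / 2) x t) := by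
  have sliceX : ∀ (f : ℝ → ℝ → ℝ), ContDiff ℝ 1 (fun p : ℝ × ℝ => f p.1 p.2) →
      ∀ t : ℝ, Differentiable ℝ (fun x' => f x' t) := fun f hf t =>
    (hf.differentiable one_ne_zero).comp (show Differentiable ℝ (fun x' : ℝ => (x', t)) from Differentiable.prodMk differentiable_id (differentiable_const t))
  have sliceT : ∀ (f : ℝ → ℝ → ℝ), ContDiff ℝ 1 (fun p : ℝ × ℝ => f p.1 p.2) →
      ∀ x : ℝ, Differentiable ℝ (fun t' => f x t') := fun f hf x =>
    (hf.differentiable one_ne_zero).comp (show Differentiable ℝ (fun t' : ℝ => (x, t')) from Differentiable.prodMk (differentiable_const x) differentiable_id)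
  intro x t
  have dhx : DifferentiableAt ℝ (fun x' => h x' t) x := sliceX h hh t x
  have dux : DifferentiableAt ℝ (fun x' => u x' t) x := sliceX u hu t x
  have dpx : DifferentiableAt ℝ (fun x' => pbar x' t) x := sliceX pbar hpbar t x
  have dht : DifferentiableAt ℝ (fun t' => h x t') t := sliceT h hh x t
  have dpt : DifferentiableAt ℝ (fun t' => pbar x t') t := sliceT pbar hpbar x t
  have e1 : pdx (fun x t => h x t * u x t) x t
      = pdx h x t * u x t + h x t * pdx u x t := by
    simp only [pdx]; exact deriv_mul dhx dux
  have e2 : pdt (fun x t => h x t * pbar x t) x t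
      = pdt h x t * pbar x t + h x t * pdt pbar x t := by
    simp only [pdt]; exact deriv_mul dht dpt
  have e3 : pdx (fun x t => h x t * u x t * (pbar x t + c ^ 2)) x t
      = (pdx h x t * u x t + h x t * pdx u x t) * (pbar x t + c ^ 2)
        + h x t * u x t * pdx pbar x t := by
    simp only [pdx]
    rw [deriv_fun_mul (dhx.fun_mul dux) (dpx.add_const _), deriv_fun_mul dhx dux,
      deriv_add_const]
  have e4 : pdt (fun x t => h x t * (pbar x t) ^ 2 / 2) x t
      = (pdt h x t * (pbar x t) ^ 2 + h x t * (2 * pbar x t * pdt pbar x t)) / 2 := by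
    simp only [pdt]
    rw [deriv_div_const, deriv_fun_mul dht (dpt.fun_pow 2), deriv_fun_pow dpt 2]
    push_cast
    ring
  have e5 : pdx (fun x t => h x t * u x t * (pbar x t) ^ 2 / 2) x t
      = ((pdx h x t * u x t + h x t * pdx u x t) * (pbar x t) ^ 2
        + h x t * u x t * (2 * pbar x t * pdx pbar x t)) / 2 := by
    simp only [pdx]
    rw [deriv_div_const, deriv_fun_mul (dhx.fun_mul dux) (dpx.fun_pow 2), deriv_fun_mul dhx dux,
      deriv_fun_pow dpx 2]
    push_cast
    ring
  have m := mass x t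
  rw [e1] at m
  have pe := pEvol x t
  rw [e2, e3] at pe
  rw [e4, e5, one_div_mul_eq_div, eq_div_iff (pow_ne_zero 2 hc)]
  linear_combination -(pbar x t) * pe + pbar x t ^ 2 / 2 * m
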